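/- Let u be an isotropic vector in an odd quadratic space (V, B, Q_𝔏) and let (v₁, x), (v₂, y) ∈ 𝔏 with u orthogonal to v₁ and v₂. Then the ESD transvections satisfy T_{u,v₁}(x) ∘ T_{u,v₂}(y) = T_{u, v₁+v₂}(x + y + B(v₁, v₂)). -/

import Mathlib

open MulOpposite

/-- The Eichler-Siegel-Dickson transvection T_{u,v}(x):
w ↦ w + u·(1̄)⁻¹(B(v,w) + x·B(u,w)) + v·B(u,w). -/
def ESD {R : Type*} [Ring R] {V : Type*} [AddCommGroup V] [Module Rᵐᵒᵖ V]
    (e : Rˣ) (B : V → V → R) (u v : V) (x : R) (w : V) : V :=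
  w + op ((↑e⁻¹ : R) * (B v w + x * B u w)) • u + op (B u w) • v

/-- composition rule for ESD transvections with common isotropic vector u:
T_{u,v1}(x) ∘ T_{u,v2}(y) = T_{u,v1+v2}(x + y + B(v1,v2)). -/
theorem stmt7 {R : Type*} [Ring R] {V : Type*} [AddCommGroup V] [Module Rᵐᵒᵖ V]
    (bar : R → R) (e : Rˣ) (he : (e : R) = bar 1)
    (hbar_add : ∀ x y : R, bar (x + y) = bar x + bar y)
    (hbar_mul : ∀ x y : R, bar (x * y) = bar y * (↑e⁻¹ : R) * bar x)
    (hbar_bar : ∀ x : R, bar (bar x) = x)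
    (B : V → V → R)
    (hB_addl : ∀ u v w : V, B (u + v) w = B u w + B v w)
    (hB_addr : ∀ u v w : V, B u (v + w) = B u v + B u w)
    (hB_sesq : ∀ (v w : V) (x y : R),
      B (op x • v) (op y • w) = bar x * (↑e⁻¹ : R) * B v w * y)
    (hB_skew : ∀ v w : V, B v w = - bar (B w v))
    (L : Set (V × R))
    (u v₁ v₂ : V) (x y : R)
    (hu_iso : ((u, (0 : R)) : V × R) ∈ L) (huu : B u u = 0)
    (hv₁ : ((v₁, x) : V × R) ∈ L) (hv₂ : ((v₂, y) : V × R) ∈ L)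
    (horth₁ : B u v₁ = 0) (horth₂ : B u v₂ = 0) :
    ∀ w : V, ESD e B u v₁ x (ESD e B u v₂ y w) =
      ESD e B u (v₁ + v₂) (x + y + B v₁ v₂) w := by
  have bar0 : bar 0 = 0 := by
    have h := hbar_add 0 0
    rw [add_zero] at h
    exact (right_eq_add.mp h)
  have hr : ∀ (v w : V) (a : R), B v (op a • w) = B v w * a := by
    intro v w a
    conv_lhs => rw [← one_smul Rᵐᵒᵖ v, ← op_one, hB_sesq, ← he]
    simp [Units.mul_inv]
  intro w
  have h1 : B u (ESD e B u v₂ y w) = B u w := by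
    simp only [ESD, hB_addr, hr, huu, horth₂, mul_zero, zero_mul, add_zero, zero_add]
  have h2 : B v₁ (ESD e B u v₂ y w) = B v₁ w + B v₁ v₂ * B u w := by
    have hv1u : B v₁ u = 0 := by rw [hB_skew, horth₁, bar0, neg_zero]
    simp only [ESD, hB_addr, hr, hv1u, mul_zero, zero_mul, add_zero, zero_add]
  show ESD e B u v₁ x _ = _
  rw [ESD, h1, h2]
  simp only [ESD, hB_addl, mul_add, add_mul, op_add, add_smul, smul_add, mul_assoc]
  abel
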